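/- Column-correlation bound for the partial DFT design: for any m ≥ 3 and any 1 ≤ l ≤ m, one has Σ_{j=1}^m |b_l^H b_j| ≤ 4 log m, where b_1,…,b_m ∈ ℂ^K are the rows of the matrix B consisting of the first K columns of the m×m unitary DFT matrix. -/

import Mathlib

open MeasureTheory ProbabilityTheory Real Finset
open scoped ENNReal

noncomputable section

namespace BlindDeconv

/-- Conjugate inner product `uᴴ v`. -/
def cdot {K : ℕ} (u v : Fin K → ℂ) : ℂ := ∑ i, (starRingEnd ℂ) (u i) * v i

/-- Euclidean norm of a complex vector. -/
def vnorm {K : ℕ} (v : Fin K → ℂ) : ℝ := Real.sqrt (∑ i, ‖v i‖ ^ 2)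

/-- Frobenius norm of a matrix. -/
def fnorm {K : ℕ} (Z : Matrix (Fin K) (Fin K) ℂ) : ℝ :=
  Real.sqrt (∑ i, ∑ j, ‖Z i j‖ ^ 2)

/-- Spectral norm of a matrix. -/
def snorm {ι : Type} [Fintype ι] [DecidableEq ι] (Z : Matrix ι ι ℂ) : ℝ :=
  ‖Matrix.toEuclideanCLM (𝕜 := ℂ) Z‖

/-- Nuclear norm: the sum of singular values. -/
def nucnorm {K : ℕ} (Z : Matrix (Fin K) (Fin K) ℂ) : ℝ :=
  ∑ i, Real.sqrt ((Matrix.isHermitian_conjTranspose_mul_self Z).eigenvalues i)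

/-- Outer product `u vᴴ`. -/
def outer {K : ℕ} (u v : Fin K → ℂ) : Matrix (Fin K) (Fin K) ℂ :=
  Matrix.of fun i j => u i * (starRingEnd ℂ) (v j)

/-- Rows of the matrix consisting of the first `K` columns of the unitary `m × m` DFT matrix. -/
def dftB (m K : ℕ) : Fin m → Fin K → ℂ := fun j i =>
  (Real.sqrt m : ℂ)⁻¹ *
    Complex.exp (2 * (Real.pi : ℂ) * Complex.I * ((j : ℕ) : ℂ) * ((i : ℕ) : ℂ) / (m : ℂ))

/-- Standard complex Gaussian `N(0, 1/2) + i·N(0, 1/2)`. -/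
def stdCGaussian : Measure ℂ :=
  Measure.map (fun p : ℝ × ℝ => (p.1 : ℂ) + (p.2 : ℂ) * Complex.I)
    ((gaussianReal 0 (1 / 2)).prod (gaussianReal 0 (1 / 2)))

/-- Complex Gaussian with independent real and imaginary parts of variance `v` each. -/
def cGaussian (v : ℝ) : Measure ℂ :=
  Measure.map (fun p : ℝ × ℝ => (p.1 : ℂ) + (p.2 : ℂ) * Complex.I)
    ((gaussianReal 0 v.toNNReal).prod (gaussianReal 0 v.toNNReal))

/-- Law of a standard complex Gaussian vector in `ℂ^K`. -/
def stdGaussianVec (K : ℕ) : Measure (Fin K → ℂ) := Measure.pi fun _ => stdCGaussian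

/-- The design vectors `a j` are i.i.d. standard complex Gaussian. -/
def GaussianDesign (Ω : Type) [MeasurableSpace Ω] (P : Measure Ω) {K m : ℕ}
    (a : Ω → Fin m → Fin K → ℂ) : Prop :=
  Measurable a ∧ Measure.map a P = Measure.pi fun _ : Fin m => stdGaussianVec K

/-- Model assumption: i.i.d. standard complex Gaussian design, independent zero-mean
sub-Gaussian noise coordinates with laws `ν j` and sub-Gaussian parameter `σ`, noise
independent of the design. -/
def DesignNoise (Ω : Type) [MeasurableSpace Ω] (P : Measure Ω) {K m : ℕ}
    (a : Ω → Fin m → Fin K → ℂ) (ξ : Ω → Fin m → ℂ) (ν : Fin m → Measure ℂ) (σ : ℝ) : Prop :=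
  Measurable a ∧ Measurable ξ ∧ (∀ j, IsProbabilityMeasure (ν j)) ∧
    (∀ j, ∫ z, z ∂ν j = 0) ∧
    (∀ j, ∀ t : ℝ, 0 ≤ t →
      ν j {z : ℂ | t ≤ ‖z‖} ≤ ENNReal.ofReal (2 * Real.exp (-t ^ 2 / σ ^ 2))) ∧
    Measure.map (fun ω => (a ω, ξ ω)) P =
      (Measure.pi fun _ : Fin m => stdGaussianVec K).prod (Measure.pi ν)

/-- Incoherence: `|b_jᴴ h| ≤ (μ/√m) ‖h‖₂` for all `j`. -/
def Incoherent {K m : ℕ} (b : Fin m → Fin K → ℂ) (hs : Fin K → ℂ) (μ : ℝ) : Prop :=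
  ∀ j, ‖cdot (b j) hs‖ ≤ μ / Real.sqrt m * vnorm hs

/-- Observations `y_j = b_jᴴ h* x*ᴴ a_j + ξ_j`. -/
def yObs {K m : ℕ} (b a : Fin m → Fin K → ℂ) (ξ : Fin m → ℂ) (hs xs : Fin K → ℂ) :
    Fin m → ℂ :=
  fun j => cdot (b j) hs * cdot xs (a j) + ξ j

/-- Wirtinger gradient of the regularized loss w.r.t. `h`. -/
def gradH {K m : ℕ} (b a : Fin m → Fin K → ℂ) (y : Fin m → ℂ) (lam : ℝ)
    (h x : Fin K → ℂ) : Fin K → ℂ :=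
  fun i => (∑ j, (cdot (b j) h * cdot x (a j) - y j) * b j i * cdot (a j) x) + (lam : ℂ) * h i

/-- Wirtinger gradient of the regularized loss w.r.t. `x`. -/
def gradX {K m : ℕ} (b a : Fin m → Fin K → ℂ) (y : Fin m → ℂ) (lam : ℝ)
    (h x : Fin K → ℂ) : Fin K → ℂ :=
  fun i =>
    (∑ j, (starRingEnd ℂ) (cdot (b j) h * cdot x (a j) - y j) * a j i * cdot (b j) h) +
      (lam : ℂ) * x i

/-- Norm of the full Wirtinger gradient `∇f(h,x)`. -/
def gradNorm {K m : ℕ} (b a : Fin m → Fin K → ℂ) (y : Fin m → ℂ) (lam : ℝ)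
    (h x : Fin K → ℂ) : ℝ :=
  Real.sqrt ((vnorm (gradH b a y lam h x)) ^ 2 + (vnorm (gradX b a y lam h x)) ^ 2)

/-- The regularized nonconvex loss `f(h,x)`. -/
def loss {K m : ℕ} (b a : Fin m → Fin K → ℂ) (y : Fin m → ℂ) (lam : ℝ)
    (h x : Fin K → ℂ) : ℝ :=
  (∑ j, ‖cdot (b j) h * cdot x (a j) - y j‖ ^ 2) + lam * (vnorm h) ^ 2 + lam * (vnorm x) ^ 2

/-- The convex (nuclear-norm regularized) objective `g(Z)`. -/
def cvxObj {K m : ℕ} (b a : Fin m → Fin K → ℂ) (y : Fin m → ℂ) (lam : ℝ)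
    (Z : Matrix (Fin K) (Fin K) ℂ) : ℝ :=
  (∑ j, ‖cdot (b j) (Z.mulVec (a j)) - y j‖ ^ 2) + 2 * lam * nucnorm Z

/-- The matrix `M = Σ_j y_j b_j a_jᴴ` used for spectral initialization. -/
def specMat {K m : ℕ} (b a : Fin m → Fin K → ℂ) (y : Fin m → ℂ) :
    Matrix (Fin K) (Fin K) ℂ :=
  ∑ j, y j • outer (b j) (a j)

/-- The leave-one-out matrix `M^(l) = Σ_{j≠l} y_j b_j a_jᴴ`. -/
def specMatLoo {K m : ℕ} (l : Fin m) (b a : Fin m → Fin K → ℂ) (y : Fin m → ℂ) :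
    Matrix (Fin K) (Fin K) ℂ :=
  ∑ j ∈ Finset.univ.erase l, y j • outer (b j) (a j)

/-- Adjoint operator `A*(z) = Σ_j z_j b_j a_jᴴ`. -/
def opAstar {K m : ℕ} (b a : Fin m → Fin K → ℂ) (z : Fin m → ℂ) :
    Matrix (Fin K) (Fin K) ℂ :=
  ∑ j, z j • outer (b j) (a j)

/-- Operator `T(Z) = A*A(Z) = Σ_j b_j b_jᴴ Z a_j a_jᴴ`. -/
def calT {K m : ℕ} (b a : Fin m → Fin K → ℂ) (Z : Matrix (Fin K) (Fin K) ℂ) :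
    Matrix (Fin K) (Fin K) ℂ :=
  ∑ j, cdot (b j) (Z.mulVec (a j)) • outer (b j) (a j)

/-- Projection onto the tangent space of `h xᴴ`. -/
def projT {K : ℕ} (h x : Fin K → ℂ) (X : Matrix (Fin K) (Fin K) ℂ) :
    Matrix (Fin K) (Fin K) ℂ :=
  ((vnorm h) ^ 2)⁻¹ • (outer h h * X) + ((vnorm x) ^ 2)⁻¹ • (X * outer x x) -
    (((vnorm h) ^ 2 * (vnorm x) ^ 2)⁻¹) • (outer h h * X * outer x x)

/-- Projection onto the orthogonal complement of the tangent space of `h xᴴ`. -/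
def projTperp {K : ℕ} (h x : Fin K → ℂ) (X : Matrix (Fin K) (Fin K) ℂ) :
    Matrix (Fin K) (Fin K) ℂ :=
  (1 - ((vnorm h) ^ 2)⁻¹ • outer h h) * X * (1 - ((vnorm x) ^ 2)⁻¹ • outer x x)

/-- The cost `√(‖h/ᾱ − h*‖² + ‖αx − x*‖²)` of aligning `(h,x)` to `(h*,x*)` via `α`. -/
def alignCost {K : ℕ} (hs xs : Fin K → ℂ) (α : ℂ) (h x : Fin K → ℂ) : ℝ :=
  Real.sqrt ((vnorm (fun i => ((starRingEnd ℂ) α)⁻¹ * h i - hs i)) ^ 2 +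
    (vnorm (fun i => α * x i - xs i)) ^ 2)

/-- The distance `dist(z, z*)` modulo global scaling. -/
def distz {K : ℕ} (h x hs xs : Fin K → ℂ) : ℝ :=
  sInf ((fun α : ℂ => alignCost hs xs α h x) '' {α : ℂ | α ≠ 0})

/-- `α` is an optimal alignment of `(h,x)` to `(h*,x*)`. -/
def IsAlign {K : ℕ} (hs xs h x : Fin K → ℂ) (α : ℂ) : Prop :=
  α ≠ 0 ∧ alignCost hs xs α h x = distz h x hs xs

/-- Aligned `h` iterate `h̃ = h / ᾱ`. -/
def alH {K : ℕ} (α : ℂ) (h : Fin K → ℂ) : Fin K → ℂ :=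
  fun i => ((starRingEnd ℂ) α)⁻¹ * h i

/-- Aligned `x` iterate `x̃ = α x`. -/
def alX {K : ℕ} (α : ℂ) (x : Fin K → ℂ) : Fin K → ℂ := fun i => α * x i

/-- `(h0, x0)` is a spectral initialization computed from the matrix `M`: a scaled leading
singular pair of `M`. -/
def SpecInit {K : ℕ} (M : Matrix (Fin K) (Fin K) ℂ) (h0 x0 : Fin K → ℂ) : Prop :=
  ∃ hc xc : Fin K → ℂ,
    vnorm hc = 1 ∧ vnorm xc = 1 ∧
    M.mulVec xc = (fun i => (snorm M : ℂ) * hc i) ∧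
    M.conjTranspose.mulVec hc = (fun i => (snorm M : ℂ) * xc i) ∧
    h0 = (fun i => (Real.sqrt (snorm M) : ℂ) * hc i) ∧
    x0 = (fun i => (Real.sqrt (snorm M) : ℂ) * xc i)

/-- One iteration of (Wirtinger) gradient descent with stepsize `η` followed by the
balancing step, with explicit half-iterates. -/
def GDStepFull {K m : ℕ} (b a : Fin m → Fin K → ℂ) (y : Fin m → ℂ) (lam η : ℝ)
    (h x hH xH hN xN : Fin K → ℂ) : Prop :=
  hH = (fun i => h i - (η : ℂ) * gradH b a y lam h x i) ∧
  xH = (fun i => x i - (η : ℂ) * gradX b a y lam h x i) ∧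
  hN = (fun i => (Real.sqrt (vnorm xH / vnorm hH) : ℂ) * hH i) ∧
  xN = (fun i => (Real.sqrt (vnorm hH / vnorm xH) : ℂ) * xH i)

/-- One iteration of gradient descent plus balancing. -/
def GDStep {K m : ℕ} (b a : Fin m → Fin K → ℂ) (y : Fin m → ℂ) (lam η : ℝ)
    (h x hN xN : Fin K → ℂ) : Prop :=
  ∃ hH xH, GDStepFull b a y lam η h x hH xH hN xN

/-- Leave-one-out Wirtinger gradient w.r.t. `h` (the `l`-th sample deleted). -/
def gradHloo {K m : ℕ} (l : Fin m) (b a : Fin m → Fin K → ℂ) (y : Fin m → ℂ) (lam : ℝ)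
    (h x : Fin K → ℂ) : Fin K → ℂ :=
  fun i =>
    (∑ j ∈ Finset.univ.erase l, (cdot (b j) h * cdot x (a j) - y j) * b j i * cdot (a j) x) +
      (lam : ℂ) * h i

/-- Leave-one-out Wirtinger gradient w.r.t. `x` (the `l`-th sample deleted). -/
def gradXloo {K m : ℕ} (l : Fin m) (b a : Fin m → Fin K → ℂ) (y : Fin m → ℂ) (lam : ℝ)
    (h x : Fin K → ℂ) : Fin K → ℂ :=
  fun i =>
    (∑ j ∈ Finset.univ.erase l,
        (starRingEnd ℂ) (cdot (b j) h * cdot x (a j) - y j) * a j i * cdot (b j) h) +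
      (lam : ℂ) * x i

/-- One leave-one-out gradient descent iteration plus balancing. -/
def GDStepLoo {K m : ℕ} (l : Fin m) (b a : Fin m → Fin K → ℂ) (y : Fin m → ℂ) (lam η : ℝ)
    (h x hN xN : Fin K → ℂ) : Prop :=
  ∃ hH xH : Fin K → ℂ,
    hH = (fun i => h i - (η : ℂ) * gradHloo l b a y lam h x i) ∧
    xH = (fun i => x i - (η : ℂ) * gradXloo l b a y lam h x i) ∧
    hN = (fun i => (Real.sqrt (vnorm xH / vnorm hH) : ℂ) * hH i) ∧
    xN = (fun i => (Real.sqrt (vnorm hH / vnorm xH) : ℂ) * xH i)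

/-- The Wirtinger Hessian of the regularized loss, as a `4K × 4K` complex matrix. -/
def hessMat {K m : ℕ} (b a : Fin m → Fin K → ℂ) (y : Fin m → ℂ) (lam : ℝ)
    (h x : Fin K → ℂ) :
    Matrix ((Fin K ⊕ Fin K) ⊕ (Fin K ⊕ Fin K)) ((Fin K ⊕ Fin K) ⊕ (Fin K ⊕ Fin K)) ℂ :=
  let A11 : Matrix (Fin K) (Fin K) ℂ :=
    (∑ j, (‖cdot x (a j)‖ ^ 2 : ℝ) • outer (b j) (b j)) + (lam : ℂ) • 1
  let A12 : Matrix (Fin K) (Fin K) ℂ :=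
    ∑ j, (cdot (b j) h * cdot x (a j) - y j) • outer (b j) (a j)
  let A22 : Matrix (Fin K) (Fin K) ℂ :=
    (∑ j, (‖cdot (b j) h‖ ^ 2 : ℝ) • outer (a j) (a j)) + (lam : ℂ) • 1
  let Ablk := Matrix.fromBlocks A11 A12 A12.conjTranspose A22
  let B12 : Matrix (Fin K) (Fin K) ℂ :=
    ∑ j, (cdot (b j) h * cdot x (a j)) • outer (b j) (a j)
  let B21 : Matrix (Fin K) (Fin K) ℂ :=
    ∑ j, (cdot (a j) x * cdot h (b j)) • outer (a j) (b j)
  let Bblk := Matrix.fromBlocks (0 : Matrix (Fin K) (Fin K) ℂ) B12 B21 0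
  Matrix.fromBlocks Ablk Bblk Bblk.conjTranspose (Ablk.map (starRingEnd ℂ))


private lemma norm_exp_theta_sub_one (θ : ℝ) :
    ‖Complex.exp (θ * Complex.I) - 1‖ = 2 * |Real.sin (θ/2)| := by
  have h1 : Complex.exp (θ * Complex.I) - 1
      = ((Real.cos θ - 1 : ℝ) : ℂ) + ((Real.sin θ : ℝ) : ℂ) * Complex.I := by
    rw [Complex.exp_mul_I]
    push_cast [Complex.ofReal_cos, Complex.ofReal_sin]
    ring
  rw [h1]
  rw [Complex.norm_add_mul_I]
  have h2 : (Real.cos θ - 1)^2 + Real.sin θ ^2 = (2 * |Real.sin (θ/2)|)^2 := by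
    have hs := Real.sin_sq_eq_half_sub (θ/2)
    have h3 : 2 * (θ/2) = θ := by ring
    rw [h3] at hs
    have h4 := Real.sin_sq_add_cos_sq θ
    have h5 := _root_.sq_abs (Real.sin (θ/2))
    nlinarith
  rw [h2, Real.sqrt_sq (by positivity)]

private lemma geom_bound (m K e : ℕ) (he1 : 1 ≤ e) (hem : e < m) :
    ‖∑ i ∈ Finset.range K, Complex.exp (2*π*Complex.I*e*i/m)‖ / m
      ≤ 1/(2*e) + 1/(2*((m:ℝ)-e)) := by
  have hm0 : (0:ℝ) < m := by
    have : 0 < m := lt_of_le_of_lt (Nat.zero_le e) hem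
    exact_mod_cast this
  have hmc : (m:ℂ) ≠ 0 := by exact_mod_cast hm0.ne'
  have he0 : (0:ℝ) < e := by exact_mod_cast he1
  have hme : (0:ℝ) < (m:ℝ) - e := by
    have : (e:ℝ) < m := by exact_mod_cast hem
    linarith
  set θ : ℝ := 2*π*e/m with hθ
  have hθc : ((θ:ℝ):ℂ) = 2*(π:ℂ)*e/m := by rw [hθ]; push_cast; ring
  have hz : ∀ i ∈ Finset.range K, Complex.exp (2*π*Complex.I*e*i/m)
      = Complex.exp ((θ:ℝ) * Complex.I) ^ i := by
    intro i _
    rw [← Complex.exp_nat_mul, hθc]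
    congr 1
    field_simp
  rw [Finset.sum_congr rfl hz]
  set z : ℂ := Complex.exp ((θ:ℝ) * Complex.I) with hzdef
  have hsinpos : 0 < Real.sin (θ/2) := by
    apply Real.sin_pos_of_pos_of_lt_pi
    · rw [hθ]
      have := Real.pi_pos
      positivity
    · rw [hθ]
      rw [div_div, div_lt_iff₀ (by positivity)]
      have : (e:ℝ) < m := by exact_mod_cast hem
      nlinarith [Real.pi_pos]
  have hnorm : ‖z - 1‖ = 2 * Real.sin (θ/2) := by
    rw [hzdef, norm_exp_theta_sub_one, abs_of_pos hsinpos]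
  have hz1 : z ≠ 1 := by
    intro h
    rw [h] at hnorm; simp at hnorm; linarith
  rw [geom_sum_eq hz1]
  have habs : ‖z‖ = 1 := Complex.norm_exp_ofReal_mul_I θ
  have hnum : ‖z ^ K - 1‖ ≤ 2 := by
    calc ‖z ^ K - 1‖ ≤ ‖z ^ K‖ + ‖(1:ℂ)‖ := norm_sub_le _ _
    _ = 2 := by rw [norm_pow, habs]; norm_num
  have key : ‖(z ^ K - 1)/(z - 1)‖ ≤ 1 / Real.sin (θ/2) := by
    rw [norm_div, hnorm]
    rw [div_le_div_iff₀ (by positivity) hsinpos]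
    nlinarith
  have hhalf : θ/2 = π * e / m := by rw [hθ]; ring
  have hsin_ge : ∀ x : ℝ, 0 ≤ x → 2*x ≤ m → 2*x/m ≤ Real.sin (π * x / m) := by
    intro x hx h2x
    have hpi := Real.pi_pos
    have := Real.mul_le_sin (x := π * x / m) (by positivity)
      (by
        rw [div_le_div_iff₀ hm0 (by norm_num : (0:ℝ) < 2)]
        nlinarith)
    calc 2*x/m = 2/π * (π * x / m) := by field_simp
    _ ≤ Real.sin (π * x / m) := this
  have hfinal : 1 / Real.sin (θ/2) / m ≤ 1/(2*e) + 1/(2*((m:ℝ)-e)) := by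
    rcases le_or_gt (2*(e:ℝ)) m with hc | hc
    · have h1 := hsin_ge e he0.le hc
      have h2 : 1 / Real.sin (θ/2) / m ≤ 1/(2*(e:ℝ)) := by
        rw [hhalf, div_div]
        apply one_div_le_one_div_of_le (by positivity)
        exact (div_le_iff₀ hm0).mp h1
      have : (0:ℝ) < 1/(2*((m:ℝ)-e)) := by positivity
      linarith
    · have hflip : Real.sin (θ/2) = Real.sin (π * ((m:ℝ)-e) / m) := by
        rw [hhalf, ← Real.sin_pi_sub]
        congr 1
        field_simp
      have h2me : 2*((m:ℝ)-e) ≤ m := by linarith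
      have h1 := hsin_ge ((m:ℝ)-e) hme.le h2me
      have h2 : 1 / Real.sin (θ/2) / m ≤ 1/(2*((m:ℝ)-e)) := by
        rw [hflip, div_div]
        apply one_div_le_one_div_of_le (by positivity)
        exact (div_le_iff₀ hm0).mp h1
      have : (0:ℝ) < 1/(2*(e:ℝ)) := by positivity
      linarith
  calc ‖(z ^ K - 1)/(z - 1)‖ / m ≤ (1 / Real.sin (θ/2)) / m := by gcongr
  _ ≤ _ := hfinal

private lemma cdot_dftB (m K : ℕ) (hm : 0 < m) (l j : Fin m) :
    ‖cdot (dftB m K l) (dftB m K j)‖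
      = ‖∑ i ∈ Finset.range K,
          Complex.exp (2*π*Complex.I*(((j - l : Fin m):ℕ):ℂ)*i/m)‖ / m := by
  have hm0 : (0:ℝ) < m := by exact_mod_cast hm
  have hmc : (m:ℂ) ≠ 0 := by exact_mod_cast hm0.ne'
  set e : ℕ := ((j - l : Fin m) : ℕ) with he
  obtain ⟨q, hq⟩ : ∃ q : ℤ, (j.val:ℤ) - l.val = (e:ℤ) + m * q := by
    have hsub : e = (m - l.val + j.val) % m := by rw [he, Fin.sub_def]
    set d : ℕ := (m - l.val + j.val) / m with hd
    have h1 : e + m * d = m - l.val + j.val := by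
      rw [hsub, hd]; exact Nat.mod_add_div _ _
    have hl := l.isLt
    refine ⟨(d : ℤ) - 1, ?_⟩
    zify [hl.le] at h1
    linear_combination -h1
  have key : ∀ i : ℕ,
      (starRingEnd ℂ) ((Real.sqrt m : ℂ)⁻¹ * Complex.exp (2*(π:ℂ)*Complex.I*(l.val:ℂ)*(i:ℂ)/m))
        * ((Real.sqrt m : ℂ)⁻¹ * Complex.exp (2*(π:ℂ)*Complex.I*(j.val:ℂ)*(i:ℂ)/m))
      = (m:ℂ)⁻¹ * Complex.exp (2*π*Complex.I*(e:ℂ)*i/m) := by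
    intro i
    rw [map_mul, map_inv₀, ← Complex.exp_conj]
    have hconj : (starRingEnd ℂ) ((Real.sqrt m : ℂ)) = (Real.sqrt m : ℂ) := Complex.conj_ofReal _
    have hconj2 : (starRingEnd ℂ) (2*(π:ℂ)*Complex.I*(l.val:ℂ)*(i:ℂ)/m)
        = -(2*(π:ℂ)*Complex.I*(l.val:ℂ)*(i:ℂ)/m) := by
      simp only [map_div₀, map_mul, Complex.conj_I, Complex.conj_ofReal, map_natCast, map_ofNat]
      ring
    rw [hconj, hconj2]
    have hsq : ((Real.sqrt m : ℂ))⁻¹ * ((Real.sqrt m : ℂ))⁻¹ = (m:ℂ)⁻¹ := by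
      rw [← mul_inv, ← Complex.ofReal_mul, Real.mul_self_sqrt hm0.le, Complex.ofReal_natCast]
    have hexp : Complex.exp (-(2*(π:ℂ)*Complex.I*(l.val:ℂ)*(i:ℂ)/m))
        * Complex.exp (2*(π:ℂ)*Complex.I*(j.val:ℂ)*(i:ℂ)/m)
      = Complex.exp (2*π*Complex.I*(e:ℂ)*i/m) := by
      rw [← Complex.exp_add]
      have hqc : ((j.val:ℕ):ℂ) - ((l.val:ℕ):ℂ) = (e:ℂ) + (m:ℂ) * (q:ℂ) := by
        exact_mod_cast congrArg (Int.cast : ℤ → ℂ) hq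
      have hqc' : ((j.val:ℕ):ℂ) = (e:ℂ) + (m:ℂ)*(q:ℂ) + ((l.val:ℕ):ℂ) := by
        linear_combination hqc
      have harg : -(2*(π:ℂ)*Complex.I*(l.val:ℂ)*(i:ℂ)/m) + 2*(π:ℂ)*Complex.I*(j.val:ℂ)*(i:ℂ)/m
          = 2*(π:ℂ)*Complex.I*(e:ℂ)*(i:ℂ)/m + ((q * i : ℤ):ℂ) * (2*(π:ℂ)*Complex.I) := by
        rw [hqc']
        push_cast
        field_simp
        ring
      rw [harg, Complex.exp_add, Complex.exp_int_mul_two_pi_mul_I, mul_one]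
    calc (Real.sqrt m : ℂ)⁻¹ * Complex.exp (-(2*(π:ℂ)*Complex.I*(l.val:ℂ)*(i:ℂ)/m))
          * ((Real.sqrt m : ℂ)⁻¹ * Complex.exp (2*(π:ℂ)*Complex.I*(j.val:ℂ)*(i:ℂ)/m))
        = ((Real.sqrt m : ℂ))⁻¹ * ((Real.sqrt m : ℂ))⁻¹ *
          (Complex.exp (-(2*(π:ℂ)*Complex.I*(l.val:ℂ)*(i:ℂ)/m))
            * Complex.exp (2*(π:ℂ)*Complex.I*(j.val:ℂ)*(i:ℂ)/m)) := by ring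
    _ = (m:ℂ)⁻¹ * Complex.exp (2*π*Complex.I*(e:ℂ)*i/m) := by rw [hsq, hexp]
  have hcdot : cdot (dftB m K l) (dftB m K j)
      = (m:ℂ)⁻¹ * ∑ i ∈ Finset.range K, Complex.exp (2*π*Complex.I*(e:ℂ)*i/m) := by
    rw [cdot, Finset.mul_sum, ← Fin.sum_univ_eq_sum_range
      (fun i : ℕ => (m:ℂ)⁻¹ * Complex.exp (2*π*Complex.I*(e:ℂ)*i/m)) K]
    exact Finset.sum_congr rfl (fun i _ => key i.val)
  rw [hcdot, norm_mul, norm_inv, Complex.norm_natCast, inv_mul_eq_div]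

/-- Lemma: column-correlation bound for the partial DFT design:
`Σ_j |b_lᴴ b_j| ≤ 4 log m` for every `l`, whenever `m ≥ 3`. -/
theorem statement5 (m K : ℕ) (hm : 3 ≤ m) (hKm : K ≤ m) (l : Fin m) :
    ∑ j : Fin m, ‖cdot (dftB m K l) (dftB m K j)‖ ≤ 4 * Real.log m := by
  have hm1 : 0 < m := by omega
  have hm0 : (0:ℝ) < m := by exact_mod_cast hm1
  set G : ℕ → ℝ := fun e =>
    ‖∑ i ∈ Finset.range K, Complex.exp (2*π*Complex.I*(e:ℂ)*i/m)‖ / m with hG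
  have h1 : ∀ j : Fin m, ‖cdot (dftB m K l) (dftB m K j)‖ = G ((j - l : Fin m) : ℕ) :=
    fun j => cdot_dftB m K hm1 l j
  rw [Finset.sum_congr rfl (fun j _ => h1 j)]
  haveI : NeZero m := ⟨hm1.ne'⟩
  have h2 : ∑ j : Fin m, G ((j - l : Fin m) : ℕ) = ∑ e : Fin m, G (e : ℕ) :=
    Fintype.sum_equiv (Equiv.subRight l) _ _ (fun j => rfl)
  rw [h2, Fin.sum_univ_eq_sum_range (fun e => G e) m]
  rw [Finset.range_eq_Ico, Finset.sum_eq_sum_Ico_succ_bot hm1]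
  -- bound on the diagonal term
  have hG0 : G 0 ≤ 1 := by
    have : G 0 = K / m := by
      simp [hG, Complex.exp_zero]
    rw [this, div_le_one hm0]
    exact_mod_cast hKm
  -- bound the off-diagonal sum
  have hbound : ∑ e ∈ Finset.Ico 1 m, G e
      ≤ ∑ e ∈ Finset.Ico 1 m, (1/(2*(e:ℝ)) + 1/(2*((m:ℝ)-e))) := by
    apply Finset.sum_le_sum
    intro e hemem
    rw [Finset.mem_Ico] at hemem
    exact geom_bound m K e hemem.1 hemem.2
  -- reflection: the two halves are equal
  have hrefl : ∑ e ∈ Finset.Ico 1 m, 1/(2*((m:ℝ)-e)) = ∑ e ∈ Finset.Ico 1 m, 1/(2*(e:ℝ)) := by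
    apply Finset.sum_nbij' (i := fun e => m - e) (j := fun e => m - e)
    · intro e hemem; rw [Finset.mem_Ico] at *; omega
    · intro e hemem; rw [Finset.mem_Ico] at *; omega
    · intro e hemem; rw [Finset.mem_Ico] at hemem; omega
    · intro e hemem; rw [Finset.mem_Ico] at hemem; omega
    · intro e hemem
      rw [Finset.mem_Ico] at hemem
      congr 1
      rw [Nat.cast_sub (by omega)]
  have hsplit : ∑ e ∈ Finset.Ico 1 m, (1/(2*(e:ℝ)) + 1/(2*((m:ℝ)-e)))
      = ∑ e ∈ Finset.Ico 1 m, (1/(e:ℝ)) := by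
    rw [Finset.sum_add_distrib, hrefl, ← Finset.sum_add_distrib]
    apply Finset.sum_congr rfl
    intro e hemem
    rw [Finset.mem_Ico] at hemem
    have he0 : (0:ℝ) < e := by exact_mod_cast hemem.1
    field_simp
    norm_num
  -- harmonic bound
  have hharm : ∑ e ∈ Finset.Ico 1 m, (1/(e:ℝ)) ≤ 1 + Real.log m := by
    have hIco : Finset.Ico 1 m = Finset.Icc 1 (m-1) := by
      rw [← Finset.Ico_add_one_right_eq_Icc]
      congr 1
      omega
    have heq : ∑ e ∈ Finset.Ico 1 m, (1/(e:ℝ)) = ((harmonic (m-1) : ℚ) : ℝ) := by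
      rw [hIco, harmonic_eq_sum_Icc]
      push_cast
      simp [one_div]
    rw [heq]
    calc ((harmonic (m-1) : ℚ) : ℝ) ≤ 1 + Real.log (m-1 : ℕ) := harmonic_le_one_add_log (m-1)
    _ ≤ 1 + Real.log m := by
        have h1 : (0:ℝ) < ((m-1 : ℕ):ℝ) := by
          have : 0 < m - 1 := by omega
          exact_mod_cast this
        have h2 : ((m-1 : ℕ):ℝ) ≤ m := by exact_mod_cast Nat.sub_le m 1
        linarith [Real.log_le_log h1 h2]
  -- conclude
  have hlog : 1 ≤ Real.log m := by
    rw [Real.le_log_iff_exp_le hm0]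
    calc Real.exp 1 ≤ 3 := by linarith [Real.exp_one_lt_d9]
    _ ≤ m := by exact_mod_cast hm
  calc G 0 + ∑ e ∈ Finset.Ico 1 m, G e
      ≤ 1 + (1 + Real.log m) := by
        have := hbound.trans (le_of_eq hsplit) |>.trans hharm
        linarith
  _ ≤ 4 * Real.log m := by linarith


end BlindDeconv
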